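/- Exponentiation, i.e. the binary operation (a,b) ↦ a^b on the positive real numbers, is a Catalan operation: any two distinct bracketings of the same size induce distinct regular operations on ({x ∈ ℝ : x > 0}, (a,b) ↦ a^b). (Paper's Proposition 3.4.) -/

import Mathlib

/-- A bracketing of size `n`: a full binary tree with `n` leaves. -/
inductive Bracketing : ℕ → Type
  | leaf : Bracketing 1
  | node : {k l : ℕ} → Bracketing k → Bracketing l → Bracketing (k + l)

/-- The `n`-ary regular operation induced by a bracketing on a magma `(G, op)`. -/
def Bracketing.eval {G : Type*} (op : G → G → G) : {n : ℕ} → Bracketing n → (Fin n → G) → G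
  | _, .leaf, v => v 0
  | _, .node P Q, v =>
      op (Bracketing.eval op P (fun i => v (Fin.castAdd _ i)))
         (Bracketing.eval op Q (fun i => v (Fin.natAdd _ i)))

/-- The associative spectrum: the number of distinct `n`-ary regular operations. -/
noncomputable def assocSpectrum {G : Type*} (op : G → G → G) (n : ℕ) : ℕ :=
  Nat.card {f : (Fin n → G) → G // ∃ B : Bracketing n, f = Bracketing.eval op B}

/-- The depth of the `i`-th leaf of a bracketing. -/
def Bracketing.depth : {n : ℕ} → Bracketing n → Fin n → ℕ
  | _, .leaf, _ => 0
  | _, .node (k := k) P Q, i =>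
      if h : (i : ℕ) < k then Bracketing.depth P ⟨i, h⟩ + 1
      else Bracketing.depth Q ⟨(i : ℕ) - k, by have := i.isLt; omega⟩ + 1

/-- The right depth of the `i`-th leaf of a bracketing. -/
def Bracketing.rdepth : {n : ℕ} → Bracketing n → Fin n → ℕ
  | _, .leaf, _ => 0
  | _, .node (k := k) P Q, i =>
      if h : (i : ℕ) < k then Bracketing.rdepth P ⟨i, h⟩
      else Bracketing.rdepth Q ⟨(i : ℕ) - k, by have := i.isLt; omega⟩ + 1

/-- The left depth of the `i`-th leaf of a bracketing. -/
def Bracketing.ldepth : {n : ℕ} → Bracketing n → Fin n → ℕ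
  | _, .leaf, _ => 0
  | _, .node (k := k) P Q, i =>
      if h : (i : ℕ) < k then Bracketing.ldepth P ⟨i, h⟩ + 1
      else Bracketing.ldepth Q ⟨(i : ℕ) - k, by have := i.isLt; omega⟩

/-- A magma operation is Catalan if distinct bracketings of equal size
    induce distinct regular operations. -/
def IsCatalanOp {G : Type*} (op : G → G → G) : Prop :=
  ∀ (n : ℕ) (B₁ B₂ : Bracketing n), B₁ ≠ B₂ →
    Bracketing.eval op B₁ ≠ Bracketing.eval op B₂

section Aux

abbrev PosR := {x : ℝ // 0 < x}

noncomputable def expOp (a b : PosR) : PosR :=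
  ⟨(a : ℝ) ^ (b : ℝ), Real.rpow_pos_of_pos a.2 _⟩

def onePos : PosR := ⟨1, one_pos⟩
def twoPos : PosR := ⟨2, two_pos⟩

inductive PTree : Type
  | leaf : PTree
  | node (a b : PTree) : PTree

namespace PTree

def size : PTree → ℕ
  | .leaf => 1
  | .node a b => a.size + b.size

lemma size_pos : ∀ t : PTree, 1 ≤ t.size
  | .leaf => le_refl 1
  | .node a b => le_trans a.size_pos (Nat.le_add_right _ _)

noncomputable def evalN : PTree → (ℕ → PosR) → PosR
  | .leaf, v => v 0
  | .node a b, v => expOp (a.evalN v) (b.evalN fun i => v (i + a.size))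

lemma evalN_congr : ∀ (t : PTree) (v w : ℕ → PosR),
    (∀ i < t.size, v i = w i) → t.evalN v = t.evalN w
  | .leaf, v, w, h => h 0 (size_pos _)
  | .node a b, v, w, h => by
      have hb := b.size_pos
      simp only [evalN]
      rw [evalN_congr a v w (fun i hi => h i (by simp [size]; omega)),
        evalN_congr b (fun i => v (i + a.size)) (fun i => w (i + a.size))
          (fun i hi => h (i + a.size) (by simp [size]; omega))]

lemma evalN_eq_one : ∀ (t : PTree) (v : ℕ → PosR),
    (v 0).1 = 1 → (t.evalN v).1 = 1
  | .leaf, v, h => h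
  | .node a b, v, h => by
      simp only [evalN, expOp]
      rw [evalN_eq_one a v h, Real.one_rpow]

lemma evalN_first (c : ℝ) : ∀ (t : PTree) (v : ℕ → PosR),
    (v 0).1 = c → (∀ i, i ≠ 0 → i < t.size → (v i).1 = 1) → (t.evalN v).1 = c
  | .leaf, v, h0, _ => h0
  | .node a b, v, h0, h1 => by
      have ha := a.size_pos
      have hb := b.size_pos
      simp only [evalN, expOp]
      rw [evalN_first c a v h0 (fun i hi hlt => h1 i hi (by simp [size]; omega)),
        evalN_eq_one b _ (by
          show (v (0 + a.size)).1 = 1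
          exact h1 (0 + a.size) (by omega) (by simp [size]; omega)),
        Real.rpow_one]

/-- The key "left sizes agree" lemma. -/
lemma split_not_lt (a b a' b' : PTree)
    (h : ∀ v, (PTree.node a b).evalN v = (PTree.node a' b').evalN v)
    (hlt : a.size < a'.size) : False := by
  have ha := a.size_pos
  have ha' := a'.size_pos
  set k₁ := a.size with hk₁
  set k₂ := a'.size with hk₂
  -- substitution: 2 at position 0, r at position k₂, 1 elsewhere
  set v : PosR → ℕ → PosR := fun r i =>
    if i = 0 then twoPos else if i = k₂ then r else onePos with hv
  have hL : ∀ r : PosR, (((PTree.node a b).evalN (v r)).1 : ℝ) = 2 := by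
    intro r
    simp only [evalN, expOp]
    rw [evalN_first 2 a (v r) (by simp [hv, twoPos])
        (fun i hi hlt' => by
          have h2 : i ≠ k₂ := by omega
          simp [hv, hi, h2, onePos]),
      evalN_eq_one b _ (by
        show ((v r) (0 + k₁)).1 = 1
        have h1 : k₁ ≠ 0 := by omega
        have h2 : k₁ ≠ k₂ := by omega
        simp [hv, h1, h2, onePos]),
      Real.rpow_one]
  have hR : ∀ r : PosR,
      (((PTree.node a' b').evalN (v r)).1 : ℝ) = (a'.evalN (v onePos)).1 ^ (r.1 : ℝ) := by
    intro r
    simp only [evalN, expOp]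
    rw [evalN_congr a' (v r) (v onePos) (fun i hi => by
        by_cases h0 : i = 0
        · simp [hv, h0]
        · have h2 : i ≠ k₂ := by omega
          simp [hv, h0, h2]),
      evalN_first r.1 b' _ (by
        show ((v r) (0 + k₂)).1 = r.1
        have h1 : k₂ ≠ 0 := by omega
        simp [hv, h1])
        (fun i hi hlt' => by
          have h1 : i + k₂ ≠ 0 := by omega
          have h2 : i + k₂ ≠ k₂ := by omega
          simp [hv, hi, ← hk₂, h2, onePos])]
  have e1 : (2 : ℝ) = (a'.evalN (v onePos)).1 := by
    have t1 := congrArg Subtype.val (h (v onePos))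
    rw [hL onePos, hR onePos] at t1
    simpa [onePos] using t1
  have e2 := congrArg Subtype.val (h (v twoPos))
  rw [hL twoPos, hR twoPos, ← e1] at e2
  have e3 : ((2:ℝ)) ^ (twoPos.1 : ℝ) = 4 := by
    rw [show (twoPos.1 : ℝ) = ((2:ℕ):ℝ) by simp [twoPos], Real.rpow_natCast]
    norm_num
  rw [e3] at e2
  norm_num at e2

/-- Main injectivity on plain trees. -/
lemma evalN_inj : ∀ s t : PTree, s.size = t.size →
    (∀ v, s.evalN v = t.evalN v) → s = t := by
  intro s
  induction s with
  | leaf =>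
    intro t hs h
    cases t with
    | leaf => rfl
    | node a b =>
      exfalso
      have := a.size_pos; have := b.size_pos
      simp [size] at hs; omega
  | node a b iha ihb =>
    intro t hs h
    cases t with
    | leaf =>
      exfalso
      have := a.size_pos; have := b.size_pos
      simp [size] at hs; omega
    | node a' b' =>
      have hk : a.size = a'.size := by
        rcases lt_trichotomy a.size a'.size with h' | h' | h'
        · exact absurd h' (fun h'' => split_not_lt a b a' b' h h'')
        · exact h'
        · exact absurd h' (fun h'' => split_not_lt a' b' a b (fun v => (h v).symm) h'')
      have hbs : b.size = b'.size := by simp [size] at hs; omega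
      have ha0 := a.size_pos
      have hEa : a = a' := by
        apply iha a' hk
        intro u
        set v : ℕ → PosR := fun i => if i < a.size then u i else onePos with hv
        have h1 := h v
        have l1 : (b.evalN fun i => v (i + a.size)).1 = 1 := by
          apply evalN_eq_one
          show (v (0 + a.size)).1 = 1
          have hh : ¬ (a.size < a.size) := by omega
          simp [hv, hh, onePos]
        have l2 : (b'.evalN fun i => v (i + a'.size)).1 = 1 := by
          apply evalN_eq_one
          show (v (0 + a'.size)).1 = 1
          have hh : ¬ (a'.size < a.size) := by omega
          simp [hv, hh, onePos]
        have h2 : a.evalN v = a'.evalN v := by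
          have := congrArg Subtype.val h1
          simp only [evalN, expOp] at this
          rw [l1, l2, Real.rpow_one, Real.rpow_one] at this
          exact Subtype.ext this
        calc a.evalN u = a.evalN v := by
              apply evalN_congr; intro i hi; simp [hv, hi]
          _ = a'.evalN v := h2
          _ = a'.evalN u := by
              apply evalN_congr; intro i hi
              rw [← hk] at hi; simp [hv, hi]
      have hEb : b = b' := by
        apply ihb b' hbs
        intro w
        set v : ℕ → PosR := fun i =>
          if i < a.size then (if i = 0 then twoPos else onePos) else w (i - a.size) with hv
        have h1 := h v
        have la : (a.evalN v).1 = 2 := by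
          apply evalN_first
          · have : (0:ℕ) < a.size := by omega
            simp [hv, this, twoPos]
          · intro i hi hlt
            simp [hv, hlt, hi, onePos]
        have la' : (a'.evalN v).1 = 2 := by
          apply evalN_first
          · have : (0:ℕ) < a.size := by omega
            simp [hv, this, twoPos]
          · intro i hi hlt
            rw [← hk] at hlt
            simp [hv, hlt, hi, onePos]
        have sb : (fun i => v (i + a.size)) = w := by
          funext i
          have : ¬ (i + a.size < a.size) := by omega
          simp [hv, this]
        have sb' : (fun i => v (i + a'.size)) = w := by
          rw [← hk]; exact sb
        have h2 := congrArg Subtype.val h1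
        simp only [evalN, expOp, sb, sb', la, la'] at h2
        have h3 : (b.evalN w).1 = (b'.evalN w).1 := by
          have hlog := congrArg Real.log h2
          rw [Real.log_rpow two_pos, Real.log_rpow two_pos] at hlog
          exact mul_right_cancel₀ (Real.log_ne_zero_of_pos_of_ne_one two_pos (by norm_num)) hlog
        exact Subtype.ext h3
      rw [hEa, hEb]

end PTree

/-- Forget the size index. -/
def Bracketing.forget : {n : ℕ} → Bracketing n → PTree
  | _, .leaf => .leaf
  | _, .node P Q => .node P.forget Q.forget

lemma Bracketing.forget_size : ∀ {n : ℕ} (B : Bracketing n), B.forget.size = n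
  | _, .leaf => rfl
  | _, .node P Q => by
      simp [Bracketing.forget, PTree.size, forget_size P, forget_size Q]

def PTree.unforget : PTree → Σ n, Bracketing n
  | .leaf => ⟨1, .leaf⟩
  | .node a b => ⟨(unforget a).1 + (unforget b).1, .node (unforget a).2 (unforget b).2⟩

lemma Bracketing.unforget_forget : ∀ {n : ℕ} (B : Bracketing n),
    PTree.unforget B.forget = ⟨n, B⟩
  | _, .leaf => rfl
  | _, .node P Q => by
      simp only [Bracketing.forget, PTree.unforget]
      rw [unforget_forget P, unforget_forget Q]

lemma Bracketing.eval_eq_evalN : ∀ {n : ℕ} (B : Bracketing n) (w : ℕ → PosR),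
    Bracketing.eval expOp B (fun i => w i.1) = B.forget.evalN w
  | _, .leaf, w => rfl
  | _, .node (k := k) (l := l) P Q, w => by
      simp only [Bracketing.eval, Bracketing.forget, PTree.evalN, forget_size]
      congr 1
      · exact eval_eq_evalN P w
      · calc Bracketing.eval expOp Q (fun i => w ((Fin.natAdd k i : Fin (k + l)) : ℕ))
            = Bracketing.eval expOp Q (fun i : Fin l => (fun j => w (j + k)) i.1) := by
              congr 1; funext i; exact congrArg w (Nat.add_comm k i.1)
          _ = PTree.evalN Q.forget (fun j => w (j + k)) := eval_eq_evalN Q (fun j => w (j + k))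

/-- Paper's Proposition 3.4: exponentiation `(a,b) ↦ a^b` on the positive reals is
Catalan. -/
theorem stmt9 :
    IsCatalanOp (fun a b : {x : ℝ // 0 < x} =>
      (⟨(a : ℝ) ^ (b : ℝ), Real.rpow_pos_of_pos a.2 _⟩ : {x : ℝ // 0 < x})) := by
  intro n B₁ B₂ hne he
  apply hne
  have hev : ∀ v, B₁.forget.evalN v = B₂.forget.evalN v := by
    intro v
    rw [← Bracketing.eval_eq_evalN B₁ v, ← Bracketing.eval_eq_evalN B₂ v]
    exact congrFun he _
  have hf : B₁.forget = B₂.forget :=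
    PTree.evalN_inj _ _ (by rw [Bracketing.forget_size, Bracketing.forget_size]) hev
  have h2 := congrArg PTree.unforget hf
  rw [Bracketing.unforget_forget, Bracketing.unforget_forget] at h2
  simpa using h2
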